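/- Let a_0, a_1, …, a_n be arbitrary complex numbers (a_m = 0 for m < 0 or m > n), let p(z) = Σ_{k=0}^n a_k z^{n−k} and q(z) = Σ_{k=0}^n (−1)^{k(k+1)/2} a_k z^{n−k}, and let H_n(p) and H_n(q) be their n×n Hurwitz matrices. Then for every 1 ≤ m ≤ n and all row indices 1 ≤ i_1 < i_2 < ⋯ < i_m ≤ n and column indices 1 ≤ j_1 < j_2 < ⋯ < j_m ≤ n, the corresponding minors satisfy: det of the submatrix of H_n(q) with rows i_1,…,i_m and columns j_1,…,j_m equals (−1)^{Σ_{k=1}^m i_k(i_k−1)/2 + Σ_{k=1}^m j_k} times the det of the submatrix of H_n(p) with the same rows and columns. In particular, corresponding minors of H_n(p) and H_n(q) have equal absolute values. -/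

import Mathlib

private lemma even_tri_sum (s i j : ℕ) (h : s + i + 1 = 2 * j) :
    Even (s * (s + 1) / 2 + ((i + 1) * i / 2 + j)) := by
  rcases Nat.even_or_odd s with ⟨t, ht⟩ | ⟨t, ht⟩
  · -- s = 2t, i = 2u+1 with j = t+u+1
    obtain ⟨u, hu⟩ : ∃ u, i = 2 * u + 1 := ⟨(i - 1) / 2, by omega⟩
    have hj : j = t + u + 1 := by omega
    subst ht hu hj
    have h1 : (t + t) * (t + t + 1) / 2 = t * (2 * t + 1) := by
      rw [show (t + t) * (t + t + 1) = 2 * (t * (2 * t + 1)) by ring]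
      omega
    have h2 : (2 * u + 1 + 1) * (2 * u + 1) / 2 = (u + 1) * (2 * u + 1) := by
      rw [show (2 * u + 1 + 1) * (2 * u + 1) = 2 * ((u + 1) * (2 * u + 1)) by ring]
      omega
    rw [h1, h2]
    exact ⟨t * t + t + u * u + 2 * u + 1, by ring⟩
  · -- s = 2t+1, i = 2u with j = t+u+1
    obtain ⟨u, hu⟩ : ∃ u, i = 2 * u := ⟨i / 2, by omega⟩
    have hj : j = t + u + 1 := by omega
    subst ht hu hj
    have h1 : (2 * t + 1) * (2 * t + 1 + 1) / 2 = (2 * t + 1) * (t + 1) := by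
      rw [show (2 * t + 1) * (2 * t + 1 + 1) = 2 * ((2 * t + 1) * (t + 1)) by ring]
      omega
    have h2 : (2 * u + 1) * (2 * u) / 2 = (2 * u + 1) * u := by
      rw [show (2 * u + 1) * (2 * u) = 2 * ((2 * u + 1) * u) by ring]
      omega
    rw [h1, h2]
    exact ⟨t * t + 2 * t + u * u + u + 1, by ring⟩

private lemma neg_one_pow_eq_of_even_add {A B : ℕ} (h : Even (A + B)) :
    ((-1 : ℂ)) ^ A = (-1) ^ B := by
  have h1 : ((-1 : ℂ)) ^ (A + B) = 1 := h.neg_one_pow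
  rw [pow_add] at h1
  have h2 : ((-1 : ℂ)) ^ B * (-1) ^ B = 1 := by
    rw [← pow_add]; exact (Even.add_self B).neg_one_pow
  calc ((-1 : ℂ)) ^ A = ((-1 : ℂ)) ^ A * ((-1) ^ B * (-1) ^ B) := by rw [h2, mul_one]
    _ = (((-1 : ℂ)) ^ A * (-1) ^ B) * (-1) ^ B := by ring
    _ = (-1) ^ B := by rw [h1, one_mul]

/-- Let `a : ℤ → ℂ` vanish outside `{0, …, n}`, let `b_m = (-1)^{m(m+1)/2} a_m` be the
coefficient sequence of the dual polynomial, and let `H_n(p)`, `H_n(q)` be the `n × n`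
Hurwitz matrices with entries `a_{2j-i}`, `b_{2j-i}` (`1`-indexed).  For strictly
increasing row indices `i_1 < ⋯ < i_m` and column indices `j_1 < ⋯ < j_m` (encoded by
strictly monotone `r c : Fin m → Fin n`, so `i_k = r k + 1`, `j_k = c k + 1`), the
corresponding minor of `H_n(q)` equals
`(-1)^{Σ i_k(i_k-1)/2 + Σ j_k}` times that of `H_n(p)`; in particular the two minors
have equal absolute values. -/
theorem hurwitz_minors_of_dual (n : ℕ) (hn : 1 ≤ n) (a : ℤ → ℂ)
    (ha : ∀ m : ℤ, (m < 0 ∨ (n : ℤ) < m) → a m = 0)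
    (m : ℕ) (hm : 1 ≤ m)
    (r c : Fin m → Fin n) (hr : StrictMono r) (hc : StrictMono c) :
    Matrix.det (Matrix.of fun k l : Fin m =>
        (-1 : ℂ) ^ ((2 * ((c l : ℤ) + 1) - ((r k : ℤ) + 1)).toNat *
            ((2 * ((c l : ℤ) + 1) - ((r k : ℤ) + 1)).toNat + 1) / 2) *
          a (2 * ((c l : ℤ) + 1) - ((r k : ℤ) + 1))) =
      (-1 : ℂ) ^ (∑ k : Fin m, (((r k : ℕ) + 1) * (r k : ℕ) / 2 + ((c k : ℕ) + 1))) *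
        Matrix.det (Matrix.of fun k l : Fin m =>
          a (2 * ((c l : ℤ) + 1) - ((r k : ℤ) + 1))) ∧
    ‖(Matrix.det (Matrix.of fun k l : Fin m =>
          (-1 : ℂ) ^ ((2 * ((c l : ℤ) + 1) - ((r k : ℤ) + 1)).toNat *
              ((2 * ((c l : ℤ) + 1) - ((r k : ℤ) + 1)).toNat + 1) / 2) *
            a (2 * ((c l : ℤ) + 1) - ((r k : ℤ) + 1))))‖ =
      ‖(Matrix.det (Matrix.of fun k l : Fin m =>
          a (2 * ((c l : ℤ) + 1) - ((r k : ℤ) + 1))))‖ := by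
  have key : Matrix.det (Matrix.of fun k l : Fin m =>
        (-1 : ℂ) ^ ((2 * ((c l : ℤ) + 1) - ((r k : ℤ) + 1)).toNat *
            ((2 * ((c l : ℤ) + 1) - ((r k : ℤ) + 1)).toNat + 1) / 2) *
          a (2 * ((c l : ℤ) + 1) - ((r k : ℤ) + 1))) =
      (-1 : ℂ) ^ (∑ k : Fin m, (((r k : ℕ) + 1) * (r k : ℕ) / 2 + ((c k : ℕ) + 1))) *
        Matrix.det (Matrix.of fun k l : Fin m =>
          a (2 * ((c l : ℤ) + 1) - ((r k : ℤ) + 1))) := by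
    have hentry : (Matrix.of fun k l : Fin m =>
        (-1 : ℂ) ^ ((2 * ((c l : ℤ) + 1) - ((r k : ℤ) + 1)).toNat *
            ((2 * ((c l : ℤ) + 1) - ((r k : ℤ) + 1)).toNat + 1) / 2) *
          a (2 * ((c l : ℤ) + 1) - ((r k : ℤ) + 1))) =
        Matrix.of fun k l : Fin m =>
          (-1 : ℂ) ^ (((r k : ℕ) + 1) * (r k : ℕ) / 2) *
            ((-1 : ℂ) ^ ((c l : ℕ) + 1) *
              a (2 * ((c l : ℤ) + 1) - ((r k : ℤ) + 1))) := by
      ext k l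
      simp only [Matrix.of_apply]
      set s : ℤ := 2 * ((c l : ℤ) + 1) - ((r k : ℤ) + 1) with hs
      rcases lt_or_ge s 0 with hneg | hpos
      · rw [ha s (Or.inl hneg)]; ring
      · have hsn : (s.toNat : ℤ) = s := Int.toNat_of_nonneg hpos
        have heq : s.toNat + (r k : ℕ) + 1 = 2 * ((c l : ℕ) + 1) := by omega
        have hev := even_tri_sum s.toNat (r k : ℕ) ((c l : ℕ) + 1) heq
        rw [neg_one_pow_eq_of_even_add hev, pow_add, mul_assoc]
    rw [hentry]
    have h1 : Matrix.det (Matrix.of fun k l : Fin m =>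
          (-1 : ℂ) ^ (((r k : ℕ) + 1) * (r k : ℕ) / 2) *
            ((-1 : ℂ) ^ ((c l : ℕ) + 1) *
              a (2 * ((c l : ℤ) + 1) - ((r k : ℤ) + 1)))) =
        (∏ k : Fin m, ((-1 : ℂ)) ^ (((r k : ℕ) + 1) * (r k : ℕ) / 2)) *
          Matrix.det (Matrix.of fun k l : Fin m =>
            (-1 : ℂ) ^ ((c l : ℕ) + 1) *
              a (2 * ((c l : ℤ) + 1) - ((r k : ℤ) + 1))) :=
      Matrix.det_mul_column _ _
    have h2 : Matrix.det (Matrix.of fun k l : Fin m =>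
          (-1 : ℂ) ^ ((c l : ℕ) + 1) *
            a (2 * ((c l : ℤ) + 1) - ((r k : ℤ) + 1))) =
        (∏ l : Fin m, ((-1 : ℂ)) ^ ((c l : ℕ) + 1)) *
          Matrix.det (Matrix.of fun k l : Fin m =>
            a (2 * ((c l : ℤ) + 1) - ((r k : ℤ) + 1))) :=
      Matrix.det_mul_row _ _
    rw [h1, h2, Finset.prod_pow_eq_pow_sum, Finset.prod_pow_eq_pow_sum,
      ← mul_assoc, ← pow_add, ← Finset.sum_add_distrib]
  refine ⟨key, ?_⟩
  rw [key, norm_mul]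
  have : ‖((-1 : ℂ) ^
      (∑ k : Fin m, (((r k : ℕ) + 1) * (r k : ℕ) / 2 + ((c k : ℕ) + 1))))‖ = 1 := by
    rw [norm_pow, norm_neg, norm_one, one_pow]
  rw [this, one_mul]
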